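/- Let K ⊂ ℝ^d be a closed solid proper convex cone and g a d×d real matrix. Then g(K \ {0}) ⊂ K \ {0} if and only if gᵗ(int(K*)) ⊂ int(K*); and g(int(K)) ⊂ int(K) if and only if gᵗ(K* \ {0}) ⊂ K* \ {0}. -/

import Mathlib

open scoped RealInnerProductSpace

/-- A closed solid proper convex cone in `ℝ^d`. -/
def IsSolidCone {d : ℕ} (K : Set (Fin d → ℝ)) : Prop :=
  IsClosed K ∧ Convex ℝ K ∧ (∀ c : ℝ, 0 ≤ c → ∀ x ∈ K, c • x ∈ K) ∧
    (interior K).Nonempty ∧ K ∩ (-K) = {0}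

/-- The dual cone `K* = {y : ⟨y,x⟩ ≥ 0 ∀ x ∈ K}`. -/
def dualCone {d : ℕ} (K : Set (Fin d → ℝ)) : Set (Fin d → ℝ) :=
  {y | ∀ x ∈ K, 0 ≤ ∑ i, y i * x i}

/-- `ℝ^d` with the Euclidean inner product, as a type synonym. -/
def EE (d : ℕ) : Type := Fin d → ℝ

instance EEacg (d : ℕ) : AddCommGroup (EE d) := inferInstanceAs (AddCommGroup (Fin d → ℝ))

instance EEmod (d : ℕ) : Module ℝ (EE d) := inferInstanceAs (Module ℝ (Fin d → ℝ))

noncomputable def EEcore (d : ℕ) : InnerProductSpace.Core ℝ (EE d) where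
  inner x y := ∑ i, x i * y i
  conj_inner_symm x y := by
    simp only [conj_trivial]
    exact Finset.sum_congr rfl fun i _ => mul_comm _ _
  re_inner_nonneg x := by
    show 0 ≤ RCLike.re (∑ i, x i * x i)
    rw [RCLike.re_to_real]
    exact Finset.sum_nonneg fun i _ => mul_self_nonneg (x i)
  add_left x y z := by
    show ∑ i, (x i + y i) * z i = ∑ i, x i * z i + ∑ i, y i * z i
    rw [← Finset.sum_add_distrib]
    exact Finset.sum_congr rfl fun i _ => add_mul _ _ _
  smul_left x y r := by
    show ∑ i, (r * x i) * y i = (starRingEnd ℝ) r * ∑ i, x i * y i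
    rw [conj_trivial, Finset.mul_sum]
    exact Finset.sum_congr rfl fun i _ => mul_assoc _ _ _
  definite x hx := by
    have h := (Finset.sum_eq_zero_iff_of_nonneg fun i _ => mul_self_nonneg (x i)).mp hx
    exact funext fun i => mul_self_eq_zero.mp (h i (Finset.mem_univ i))

noncomputable instance EEnorm (d : ℕ) : NormedAddCommGroup (EE d) :=
  letI : InnerProductSpace.Core ℝ (EE d) := EEcore d
  InnerProductSpace.Core.toNormedAddCommGroup (𝕜 := ℝ)

noncomputable instance EEips (d : ℕ) : InnerProductSpace ℝ (EE d) :=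
  letI : InnerProductSpace.Core ℝ (EE d) := EEcore d
  InnerProductSpace.ofCore (𝕜 := ℝ) (F := EE d) inferInstance

instance EEfd (d : ℕ) : FiniteDimensional ℝ (EE d) := inferInstanceAs (FiniteDimensional ℝ (Fin d → ℝ))

noncomputable def EEequiv (d : ℕ) : EE d ≃L[ℝ] (Fin d → ℝ) :=
  LinearEquiv.toContinuousLinearEquiv
    { toFun := fun x => x, invFun := fun x => x, map_add' := fun _ _ => rfl,
      map_smul' := fun _ _ => rfl, left_inv := fun _ => rfl, right_inv := fun _ => rfl }

section Bridge

variable {d : ℕ}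

local notation "E" => EE d

lemma interior_pilp (s : Set (Fin d → ℝ)) :
    interior s = @interior E _ s := by
  have h := ((EEequiv d).toHomeomorph).image_interior s
  have hid : ∀ t : Set E, (EEequiv d).toHomeomorph '' t = t := by
    intro t; ext x
    constructor
    · rintro ⟨z, hz, rfl⟩; exact hz
    · intro hx; exact ⟨x, hx, rfl⟩
  erw [hid, hid] at h
  exact h.symm

lemma isClosed_pilp {s : Set (Fin d → ℝ)} (hs : IsClosed s) : @IsClosed E _ s := by
  have h := ((EEequiv d).toHomeomorph).symm.isClosed_image (s := s)
  have hid : ((EEequiv d).toHomeomorph).symm '' s = s := by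
    ext x
    constructor
    · rintro ⟨z, hz, rfl⟩; exact hz
    · intro hx; exact ⟨x, hx, rfl⟩
  rw [hid] at h
  exact h.mpr hs

lemma inner_pilp (y x : E) : ⟪y, x⟫ = ∑ i, y i * x i := by
  rfl

lemma adj_pilp (g : Matrix (Fin d) (Fin d) ℝ) (y x : E) :
    @inner ℝ E _ (g.transpose.mulVec y) x = @inner ℝ E _ y (g.mulVec x) := by
  erw [inner_pilp, inner_pilp]
  simp only [Matrix.mulVec, dotProduct, Matrix.transpose_apply, Finset.sum_mul,
    Finset.mul_sum]
  rw [Finset.sum_comm]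
  exact Finset.sum_congr rfl fun i _ => Finset.sum_congr rfl fun j _ => by ring

end Bridge

section DualSet

variable {H : Type*} [NormedAddCommGroup H] [InnerProductSpace ℝ H]

/-- The dual of a set, as a set. -/
def dualSet (C : Set H) : Set H := {y | ∀ x ∈ C, 0 ≤ ⟪y, x⟫}

lemma zero_mem_dualSet (C : Set H) : (0 : H) ∈ dualSet C := fun x _ => by
  rw [inner_zero_left]

lemma dualSet_convex (C : Set H) : Convex ℝ (dualSet C) := by
  intro y hy z hz a b ha hb _
  intro x hx
  rw [inner_add_left, real_inner_smul_left, real_inner_smul_left]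
  have := hy x hx
  have := hz x hx
  positivity

lemma dualSet_cone (C : Set H) : ∀ c : ℝ, 0 ≤ c → ∀ y ∈ dualSet C, c • y ∈ dualSet C := by
  intro c hc y hy x hx
  rw [real_inner_smul_left]
  exact mul_nonneg hc (hy x hx)

lemma dualSet_isClosed (C : Set H) : IsClosed (dualSet C) := by
  have : dualSet C = ⋂ x ∈ C, {y : H | 0 ≤ ⟪y, x⟫} := by
    ext y; simp [dualSet]
  rw [this]
  exact isClosed_biInter fun x _ =>
    isClosed_le continuous_const (continuous_id.inner continuous_const)

/-- Characterization of the interior of the dual cone. -/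
lemma interior_dualSet [FiniteDimensional ℝ H] {C : Set H} (hC : IsClosed C)
    (hcone : ∀ c : ℝ, 0 ≤ c → ∀ x ∈ C, c • x ∈ C) :
    interior (dualSet C) = {y | ∀ x ∈ C, x ≠ 0 → 0 < ⟪y, x⟫} := by
  ext y
  constructor
  · intro hy x hx hx0
    obtain ⟨ε, hε, hball⟩ := Metric.mem_nhds_iff.mp (mem_interior_iff_mem_nhds.mp hy)
    have hxn : 0 < ‖x‖ := norm_pos_iff.mpr hx0
    set c := ε / (2 * ‖x‖) with hc
    have hcpos : 0 < c := by positivity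
    have hch : c * ‖x‖ = ε / 2 := by
      rw [hc]; field_simp
    have hmem : y - c • x ∈ Metric.ball y ε := by
      rw [Metric.mem_ball, dist_eq_norm]
      have h1 : y - c • x - y = -(c • x) := by abel
      rw [h1, norm_neg, norm_smul, Real.norm_eq_abs, abs_of_pos hcpos, hch]
      linarith
    have h2 := hball hmem x hx
    rw [inner_sub_left, real_inner_smul_left, real_inner_self_eq_norm_sq] at h2
    have h3 : 0 < c * ‖x‖ ^ 2 := by positivity
    linarith
  · intro hy
    by_cases hS : (C ∩ Metric.sphere (0 : H) 1).Nonempty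
    · have hcomp : IsCompact (C ∩ Metric.sphere (0 : H) 1) :=
        (isCompact_sphere (0 : H) 1).inter_left hC
      have hcont : ContinuousOn (fun t : H => ⟪y, t⟫) (C ∩ Metric.sphere (0 : H) 1) :=
        (Continuous.inner continuous_const continuous_id).continuousOn
      obtain ⟨x0, hx0, hmin⟩ := hcomp.exists_isMinOn hS hcont
      have hx0n : x0 ≠ 0 := by
        intro h; rw [h] at hx0
        simpa using hx0.2
      have hm : 0 < ⟪y, x0⟫ := hy x0 hx0.1 hx0n
      apply mem_interior.mpr
      refine ⟨Metric.ball y ⟪y, x0⟫, ?_, Metric.isOpen_ball, Metric.mem_ball_self hm⟩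
      intro z hz x hx
      by_cases hx0' : x = 0
      · rw [hx0', inner_zero_right]
      · have hxn : 0 < ‖x‖ := norm_pos_iff.mpr hx0'
        set u : H := ‖x‖⁻¹ • x with hu
        have huC : u ∈ C := hcone _ (by positivity) x hx
        have hun : ‖u‖ = 1 := by
          rw [hu, norm_smul, norm_inv, norm_norm]
          field_simp
        have huS : u ∈ C ∩ Metric.sphere (0 : H) 1 := ⟨huC, by simpa using hun⟩
        have h3 : ⟪y, x0⟫ ≤ ⟪y, u⟫ := hmin huS
        have h4 : |⟪z - y, u⟫| ≤ ‖z - y‖ * ‖u‖ := abs_real_inner_le_norm _ _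
        have h5 : ‖z - y‖ < ⟪y, x0⟫ := by
          rw [← dist_eq_norm]
          exact Metric.mem_ball.mp hz
        have h6 : 0 < ⟪z, u⟫ := by
          have heq : ⟪z, u⟫ = ⟪y, u⟫ + ⟪z - y, u⟫ := by
            rw [← inner_add_left]
            congr 1
            abel
          rw [hun] at h4
          have := abs_le.mp h4
          rw [heq]
          nlinarith
        have h7 : x = ‖x‖ • u := by
          rw [hu, smul_smul]
          rw [mul_inv_cancel₀ hxn.ne', one_smul]
        rw [h7, real_inner_smul_right]
        positivity
    · have hCz : ∀ x ∈ C, x = 0 := by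
        intro x hx
        by_contra hx0
        have hxn : 0 < ‖x‖ := norm_pos_iff.mpr hx0
        have : ‖x‖⁻¹ • x ∈ C ∩ Metric.sphere (0 : H) 1 := by
          refine ⟨hcone _ (by positivity) x hx, ?_⟩
          simp only [Metric.mem_sphere, dist_zero_right, norm_smul, norm_inv, norm_norm]
          field_simp
        exact hS ⟨_, this⟩
      have : dualSet C = Set.univ := by
        ext z
        simp only [Set.mem_univ, iff_true]
        intro x hx
        rw [hCz x hx, inner_zero_right]
      rw [this, interior_univ]
      trivial

/-- The bipolar theorem, set version. -/
lemma dualSet_dualSet [CompleteSpace H] {C : Set H} (hC : IsClosed C) (hconv : Convex ℝ C)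
    (hcone : ∀ c : ℝ, 0 ≤ c → ∀ x ∈ C, c • x ∈ C) (h0 : (0 : H) ∈ C) :
    dualSet (dualSet C) = C := by
  set K : ConvexCone ℝ H :=
    { carrier := C
      smul_mem' := fun c hc x hx => hcone c hc.le x hx
      add_mem' := by
        intro x hx y hy
        have h1 : (1/2 : ℝ) • x + (1/2 : ℝ) • y ∈ C :=
          hconv hx hy (by norm_num) (by norm_num) (by norm_num)
        have h2 := hcone 2 (by norm_num) _ h1
        have : (2 : ℝ) • ((1/2 : ℝ) • x + (1/2 : ℝ) • y) = x + y := by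
          rw [smul_add, smul_smul, smul_smul]
          norm_num
        rwa [this] at h2 } with hK
  let P : ProperCone ℝ H :=
    { carrier := C
      add_mem' := fun hx hy => K.add_mem hx hy
      zero_mem' := h0
      smul_mem' := fun c x hx => hcone c c.2 x hx
      isClosed' := hC }
  have hbi := ProperCone.innerDual_innerDual P
  ext z; constructor
  · intro hz
    have hz' : z ∈ ProperCone.innerDual (ProperCone.innerDual (P : Set H) : Set H) := by
      refine ProperCone.mem_innerDual.mpr fun x hx => ?_
      have hx' := ProperCone.mem_innerDual.mp hx
      rw [real_inner_comm]
      exact hz x fun w hw => by rw [real_inner_comm]; exact hx' hw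
    rw [hbi] at hz'
    exact hz'
  · intro hz y hy
    rw [real_inner_comm]
    exact hy z hz

/-- If `C` is pointed, its dual has nonempty interior. -/
lemma dualSet_solid [FiniteDimensional ℝ H] {C : Set H} (hC : IsClosed C) (hconv : Convex ℝ C)
    (hcone : ∀ c : ℝ, 0 ≤ c → ∀ x ∈ C, c • x ∈ C) (h0 : (0 : H) ∈ C)
    (hpointed : C ∩ (-C) ⊆ {0}) : (interior (dualSet C)).Nonempty := by
  haveI : CompleteSpace H := FiniteDimensional.complete ℝ H
  rw [Convex.interior_nonempty_iff_affineSpan_eq_top (dualSet_convex C)]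
  rw [AffineSubspace.affineSpan_eq_top_iff_vectorSpan_eq_top_of_nonempty ℝ H H
    ⟨0, zero_mem_dualSet C⟩]
  by_contra hne
  obtain ⟨x, hxV, hx0⟩ : ∃ x ∈ (vectorSpan ℝ (dualSet C))ᗮ, x ≠ 0 := by
    obtain ⟨x, hx, hx0⟩ := Submodule.exists_mem_ne_zero_of_ne_bot (p := (vectorSpan ℝ (dualSet C))ᗮ)
      (fun hbot => hne (Submodule.orthogonal_eq_bot_iff.mp hbot))
    exact ⟨x, hx, hx0⟩
  have hx : ∀ y ∈ dualSet C, ⟪x, y⟫ = 0 := by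
    intro y hy
    have hyV : y ∈ vectorSpan ℝ (dualSet C) := by
      have := vsub_mem_vectorSpan ℝ hy (zero_mem_dualSet C)
      simpa using this
    have := (Submodule.mem_orthogonal _ x).mp hxV y hyV
    rw [real_inner_comm]; exact this
  have hxC : x ∈ C := by
    rw [← dualSet_dualSet hC hconv hcone h0]
    intro y hy; rw [hx y hy]
  have hxC' : -x ∈ C := by
    rw [← dualSet_dualSet hC hconv hcone h0]
    intro y hy; rw [inner_neg_left, hx y hy, neg_zero]
  exact hx0 (hpointed ⟨hxC, by simpa using hxC'⟩)

/-- If `C` has nonempty interior, its dual is pointed. -/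
lemma dualSet_pointed {C : Set H} (hsolid : (interior C).Nonempty) :
    dualSet C ∩ (-(dualSet C)) ⊆ {0} := by
  rintro y ⟨hy, hy'⟩
  have hy'' : -y ∈ dualSet C := Set.mem_neg.mp hy'
  have hzero : ∀ x ∈ C, ⟪y, x⟫ = 0 := by
    intro x hx
    have h1 := hy x hx
    have h2 := hy'' x hx
    rw [inner_neg_left] at h2
    linarith
  by_contra hy0
  have hy0' : y ≠ 0 := fun h => hy0 (by simp [h])
  have hyn : 0 < ‖y‖ := norm_pos_iff.mpr hy0'
  obtain ⟨x0, hx0⟩ := hsolid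
  obtain ⟨r, hr, hball⟩ := Metric.isOpen_iff.mp isOpen_interior x0 hx0
  set c := r / (2 * ‖y‖) with hc
  have hcpos : 0 < c := by positivity
  have hch : c * ‖y‖ = r / 2 := by
    rw [hc]; field_simp
  have hz : x0 + c • y ∈ C := by
    apply interior_subset
    apply hball
    rw [Metric.mem_ball, dist_eq_norm]
    have h1 : x0 + c • y - x0 = c • y := by abel
    rw [h1, norm_smul, Real.norm_eq_abs, abs_of_pos hcpos, hch]
    linarith
  have h3 := hzero _ hz
  rw [inner_add_right, hzero x0 (interior_subset hx0), real_inner_smul_right,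
    real_inner_self_eq_norm_sq] at h3
  nlinarith

/-- Density of the interior in a convex set with nonempty interior. -/
lemma subset_closure_interior' {s : Set H} (hconv : Convex ℝ s) (hne : (interior s).Nonempty) :
    s ⊆ closure (interior s) := by
  obtain ⟨x0, hx0⟩ := hne
  intro y hy
  have hseq : ∀ n : ℕ, (1/(n+1) : ℝ) • x0 + (1 - 1/(n+1) : ℝ) • y ∈ interior s := by
    intro n
    apply hconv.combo_interior_closure_mem_interior hx0 (subset_closure hy)
    · positivity
    · have h1 : (0:ℝ) < (n:ℝ) + 1 := by positivity
      have h2 : 1/((n:ℝ)+1) ≤ 1 := by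
        rw [div_le_one h1]; linarith
      linarith
    · ring
  have h1 : Filter.Tendsto (fun n : ℕ => (1/(n+1) : ℝ)) Filter.atTop (nhds 0) :=
    tendsto_one_div_add_atTop_nhds_zero_nat
  have h2a : Filter.Tendsto (fun n : ℕ => (1 - 1/(n+1) : ℝ)) Filter.atTop (nhds (1 - 0)) :=
    Filter.Tendsto.sub tendsto_const_nhds h1
  have h2 : Filter.Tendsto (fun n : ℕ => (1/(n+1) : ℝ) • x0 + (1 - 1/(n+1) : ℝ) • y)
      Filter.atTop (nhds ((0:ℝ) • x0 + ((1:ℝ) - 0) • y)) :=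
    Filter.Tendsto.add (h1.smul_const x0) (h2a.smul_const y)
  have h3 : ((0:ℝ) • x0 + ((1:ℝ) - 0) • y) = y := by simp
  rw [h3] at h2
  exact mem_closure_of_tendsto h2 (Filter.Eventually.of_forall hseq)

lemma nonneg_of_interior {s : Set H} (hconv : Convex ℝ s) (hne : (interior s).Nonempty) (v : H)
    (h : ∀ y ∈ interior s, 0 ≤ ⟪y, v⟫) : ∀ y ∈ s, 0 ≤ ⟪y, v⟫ := by
  intro y hy
  have h1 : closure (interior s) ⊆ {y : H | 0 ≤ ⟪y, v⟫} :=
    closure_minimal h (isClosed_le continuous_const (continuous_id.inner continuous_const))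
  exact h1 (subset_closure_interior' hconv hne hy)

end DualSet

/-- `g(K∖{0}) ⊆ K∖{0}` iff `gᵗ(int K*) ⊆ int K*`; and `g(int K) ⊆ int K` iff
`gᵗ(K*∖{0}) ⊆ K*∖{0}`. -/
theorem stmt16 {d : ℕ} (K : Set (Fin d → ℝ)) (hK : IsSolidCone K)
    (g : Matrix (Fin d) (Fin d) ℝ) :
    ((g.mulVec '' (K \ {0}) ⊆ K \ {0}) ↔
      (g.transpose.mulVec '' interior (dualCone K) ⊆ interior (dualCone K))) ∧
    ((g.mulVec '' interior K ⊆ interior K) ↔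
      (g.transpose.mulVec '' (dualCone K \ {0}) ⊆ dualCone K \ {0})) := by
  obtain ⟨hclosed, hconv, hcone, hsolid, hpointed⟩ := hK
  -- bridge to the Euclidean structure
  have hclosedE : @IsClosed (EE d) _ K := isClosed_pilp hclosed
  have hconvE : Convex ℝ (K : Set (EE d)) := hconv
  have hconeE : ∀ c : ℝ, 0 ≤ c → ∀ x ∈ (K : Set (EE d)),
      c • x ∈ (K : Set (EE d)) := hcone
  have h0K : (0 : Fin d → ℝ) ∈ K := by
    have : (0 : Fin d → ℝ) ∈ K ∩ (-K) := hpointed.symm ▸ Set.mem_singleton _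
    exact this.1
  have hpointedK : (K : Set (EE d)) ∩ (-K) ⊆ {0} := hpointed.le
  have hsolidE : (@interior (EE d) _ K).Nonempty := by
    rw [← interior_pilp]; exact hsolid
  -- the dual cone as a dualSet in E
  have hdual : dualCone K = dualSet (H := EE d) K := by
    ext y
    simp only [dualCone, dualSet, Set.mem_setOf_eq]
    constructor
    · intro h x hx; erw [inner_pilp]; exact h x hx
    · intro h x hx; rw [← inner_pilp (d := d) y x]; exact h x hx
  haveI : CompleteSpace (EE d) :=
    FiniteDimensional.complete ℝ (EE d)
  -- properties of the dual
  have hDconv : Convex ℝ (dualSet (H := EE d) K) := dualSet_convex (H := EE d) K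
  have hbipolar : dualSet (H := EE d)
      (dualSet (H := EE d) K) = K :=
    dualSet_dualSet hclosedE hconvE hconeE h0K
  have hDsolid : (@interior (EE d) _
      (dualSet (H := EE d) K)).Nonempty :=
    dualSet_solid hclosedE hconvE hconeE h0K hpointedK
  -- interior characterizations
  have charDual := interior_dualSet (H := EE d) hclosedE hconeE
  have charK := interior_dualSet (H := EE d)
    (C := dualSet (H := EE d) K) (dualSet_isClosed (H := EE d) K) (dualSet_cone (H := EE d) K)
  rw [hbipolar] at charK
  -- rewrite goal in terms of E
  rw [hdual, interior_pilp (dualSet (H := EE d) K), interior_pilp K]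
  constructor
  · constructor
    · -- g(K\0) ⊆ K\0 → gᵗ(int K*) ⊆ int K*
      intro h
      rintro _ ⟨y, hy, rfl⟩
      rw [charDual] at hy ⊢
      intro x hx hx0
      have hgx : g.mulVec x ∈ K \ {0} := h ⟨x, ⟨hx, hx0⟩, rfl⟩
      erw [adj_pilp]
      exact hy _ hgx.1 (hgx.2)
    · -- gᵗ(int K*) ⊆ int K* → g(K\0) ⊆ K\0
      intro h
      rintro _ ⟨x, ⟨hx, hx0⟩, rfl⟩
      have hx0' : x ≠ (0 : EE d) := hx0
      have key : ∀ y ∈ @interior (EE d) _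
          (dualSet (H := EE d) K),
          0 < @inner ℝ (EE d) _ y (g.mulVec x) := by
        intro y hy
        have h2 := h ⟨y, hy, rfl⟩
        rw [charDual] at h2
        erw [← adj_pilp]
        exact h2 x hx hx0'
      have hgxK : g.mulVec x ∈ (K : Set (EE d)) := by
        rw [← hbipolar]
        intro y hy
        erw [real_inner_comm]
        exact nonneg_of_interior hDconv hDsolid (g.mulVec x)
          (fun z hz => (key z hz).le) y hy
      have hgx0 : g.mulVec x ≠ (0 : EE d) := by
        obtain ⟨y0, hy0⟩ := hDsolid
        intro hz
        have h2 := key y0 hy0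
        rw [hz, inner_zero_right] at h2
        exact lt_irrefl _ h2
      exact ⟨hgxK, hgx0⟩
  · constructor
    · -- g(int K) ⊆ int K → gᵗ(K*\0) ⊆ K*\0
      intro h
      rintro _ ⟨y, ⟨hy, hy0⟩, rfl⟩
      have hy0' : y ≠ (0 : EE d) := hy0
      have key : ∀ x ∈ @interior (EE d) _ (K : Set (EE d)),
          0 < @inner ℝ (EE d) _ x (g.transpose.mulVec y) := by
        intro x hx
        have hgx := h ⟨x, hx, rfl⟩
        rw [charK] at hgx
        erw [real_inner_comm, adj_pilp, real_inner_comm]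
        exact hgx y hy hy0'
      have hmemD : g.transpose.mulVec y ∈ dualSet (H := EE d) K := by
        intro x hx
        erw [real_inner_comm]
        exact nonneg_of_interior hconvE hsolidE (g.transpose.mulVec y)
          (fun z hz => (key z hz).le) x hx
      have hne0 : g.transpose.mulVec y ≠ (0 : EE d) := by
        obtain ⟨x0, hx0⟩ := hsolidE
        intro hz
        have h2 := key x0 hx0
        rw [hz, inner_zero_right] at h2
        exact lt_irrefl _ h2
      exact ⟨hmemD, hne0⟩
    · -- gᵗ(K*\0) ⊆ K*\0 → g(int K) ⊆ int K
      intro h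
      rintro _ ⟨x, hx, rfl⟩
      rw [charK] at hx ⊢
      intro y hy hy0
      have hgy : g.transpose.mulVec y ∈ dualSet (H := EE d) K \ {0} :=
        h ⟨y, ⟨hy, hy0⟩, rfl⟩
      have h2 : 0 < @inner ℝ (EE d) _ x (g.transpose.mulVec y) :=
        hx _ hgy.1 (hgy.2)
      erw [real_inner_comm, adj_pilp, real_inner_comm] at h2
      exact h2
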